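/- If a simple game G = (N, W) with ∅ ∉ W has a rough voting representation (q; w) with q = 0, then G has a passer, i.e., a player i° such that every coalition containing i° is winning; consequently G also has the integer rough representation with q = 0, w_{i°} = 1, and w_i = 0 for i ≠ i°. -/

import Mathlib

/-- A square real matrix has all entries in {0,1}. -/
def IsZeroOne {k : ℕ} (M : Matrix (Fin k) (Fin k) ℝ) : Prop :=
  ∀ i j, M i j = 0 ∨ M i j = 1

/-- `alpha k` is the maximum of `|det M|` over k×k 0–1 matrices. -/
noncomputable def alpha (k : ℕ) : ℝ :=
  sSup {x : ℝ | ∃ M : Matrix (Fin k) (Fin k) ℝ, IsZeroOne M ∧ x = |M.det|}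

/-- `(q; w)` is a rough voting representation of the simple game `W`:
`w` is nonnegative, `(q; w)` is not the zero vector, coalitions of weight
less than `q` are losing and coalitions of weight more than `q` are winning. -/
def IsRoughRep {n : ℕ} (W : Set (Finset (Fin n))) (q : ℝ) (w : Fin n → ℝ) : Prop :=
  (∀ i, 0 ≤ w i) ∧ (q ≠ 0 ∨ ∃ i, w i ≠ 0) ∧
  ∀ S : Finset (Fin n),
    ((∑ i ∈ S, w i) < q → S ∉ W) ∧ (q < ∑ i ∈ S, w i → S ∈ W)

/-- A simple game is roughly weighted if it has a rough voting representation. -/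
def RoughlyWeighted {n : ℕ} (W : Set (Finset (Fin n))) : Prop :=
  ∃ (q : ℝ) (w : Fin n → ℝ), IsRoughRep W q w

/-- `(X; Y)` is a trading transform: every player occurs equally often
among the `X`'s and among the `Y`'s. -/
def IsTradingTransform {n j : ℕ} (X Y : Fin j → Finset (Fin n)) : Prop :=
  ∀ p : Fin n,
    (Finset.univ.filter fun i => p ∈ X i).card =
    (Finset.univ.filter fun i => p ∈ Y i).card

theorem stmt_18 {n : ℕ} (W : Set (Finset (Fin n)))
    (hempty : (∅ : Finset (Fin n)) ∉ W)
    (w : Fin n → ℝ) (hrep : IsRoughRep W 0 w) :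
    ∃ i₀ : Fin n,
      (∀ S : Finset (Fin n), i₀ ∈ S → S ∈ W) ∧
      IsRoughRep W 0 (fun i => if i = i₀ then (1 : ℝ) else 0) := by
  obtain ⟨hnn, hnz, hS⟩ := hrep
  obtain ⟨i₀, hi₀⟩ := hnz.resolve_left (by simp)
  have hpos : 0 < w i₀ := lt_of_le_of_ne (hnn i₀) (Ne.symm hi₀)
  have hpass : ∀ S : Finset (Fin n), i₀ ∈ S → S ∈ W := by
    intro S hmem
    refine (hS S).2 ?_
    calc (0:ℝ) < w i₀ := hpos
    _ ≤ ∑ i ∈ S, w i := Finset.single_le_sum (fun i _ => hnn i) hmem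
  refine ⟨i₀, hpass, fun i => by positivity, Or.inr ⟨i₀, by simp⟩, fun S => ?_⟩
  have hsum : (∑ i ∈ S, (if i = i₀ then (1:ℝ) else 0)) = if i₀ ∈ S then 1 else 0 := by
    simp [Finset.sum_ite_eq' S i₀ (fun _ => (1:ℝ))]
  constructor
  · intro h; exfalso
    rw [hsum] at h; split_ifs at h <;> linarith
  · intro h
    rw [hsum] at h
    split_ifs at h with hm
    · exact hpass S hm
    · linarith
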